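/- arXiv:0809.4040 — 2 statements merged into one kernel-verified Lean document; each statement's English description precedes it below -/
import Mathlib

section
/- Let R : [0, ∞) → ℝ be a differentiable function satisfying R'(t) ≥ (2/3)·R(t)² for all t ≥ 0 and R(0) ≥ -6. Then for all t ≥ 0, R(t) ≥ -3/(2(t + 1/4)). -/
open Set

/-- Derivative of the barrier function `t ↦ -3/(2(t+1/4))`. -/
lemma hasDerivAt_barrier (x : ℝ) (hx : -1/4 < x) :
    HasDerivAt (fun s : ℝ => -3 / (2 * (s + 1/4))) (3 / (2 * (x + 1/4)^2)) x := by
  have hy : (0:ℝ) < x + 1/4 := by linarith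
  have hne : 2 * (x + 1/4) ≠ 0 := by positivity
  have h : HasDerivAt (fun s : ℝ => -3 / (2 * (s + 1/4)))
      ((0 * (2 * (x + 1/4)) - (-3) * 2) / (2 * (x + 1/4))^2) x := by
    have := (hasDerivAt_const x (-3 : ℝ)).div
      (((hasDerivAt_id x).add_const (1/4 : ℝ)).const_mul 2) hne
    simpa [Pi.div_def] using this
  have h2 : ((0 * (2 * (x + 1/4)) - (-3) * 2) / (2 * (x + 1/4))^2)
      = 3 / (2 * (x + 1/4)^2) := by
    rw [div_eq_div_iff (pow_ne_zero 2 hne)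
      (mul_ne_zero two_ne_zero (pow_ne_zero 2 (ne_of_gt hy)))]
    ring
  exact h2 ▸ h

/-- ODE comparison giving the lower bound `R(t) ≥ -3/(2(t+1/4))`. -/
theorem rmin_lower_bound (R R' : ℝ → ℝ)
    (hderiv : ∀ t : ℝ, 0 ≤ t → HasDerivAt R (R' t) t)
    (hineq : ∀ t : ℝ, 0 ≤ t → (2/3) * (R t)^2 ≤ R' t)
    (h0 : -6 ≤ R 0) :
    ∀ t : ℝ, 0 ≤ t → -3 / (2 * (t + 1/4)) ≤ R t := by
  intro t ht
  have key : ∀ ε : ℝ, 0 < ε → -3 / (2 * (t + 1/4)) - ε * (t + 1) ≤ R t := by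
    intro ε hε
    have main :
        ∀ ⦃x : ℝ⦄, x ∈ Icc (0:ℝ) t →
          (fun s => -3 / (2 * (s + 1/4)) - ε * (s + 1)) x ≤ R x := by
      apply image_le_of_deriv_right_lt_deriv_boundary'
        (f' := fun s => 3 / (2 * (s + 1/4)^2) - ε) (B := R) (B' := R')
      · intro x hx
        have hx4 : -1/4 < x := by linarith [hx.1]
        exact (((hasDerivAt_barrier x hx4).sub
          (((hasDerivAt_id x).add_const (1:ℝ)).const_mul ε)).continuousAt).continuousWithinAt
      · intro x hx
        have hx4 : -1/4 < x := by linarith [hx.1]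
        have h := (hasDerivAt_barrier x hx4).sub
          (((hasDerivAt_id x).add_const (1:ℝ)).const_mul ε)
        simpa [mul_comm, Pi.sub_def] using h.hasDerivWithinAt
      · show -3 / (2 * ((0:ℝ) + 1/4)) - ε * (0 + 1) ≤ R 0
        norm_num
        linarith
      · intro x hx
        exact (hderiv x hx.1).continuousAt.continuousWithinAt
      · intro x hx
        exact (hderiv x hx.1).hasDerivWithinAt
      · intro x hx heq
        have hx0 : 0 ≤ x := hx.1
        have hR := hineq x hx0
        set d : ℝ := x + 1/4 with hd
        have hdpos : (0:ℝ) < d := by rw [hd]; linarith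
        set p : ℝ := 3 / (2 * d) with hp
        have hppos : 0 < p := by positivity
        have hRx : R x = -p - ε * (x + 1) := by
          rw [← heq, hp, neg_div]
        have hident : 3 / (2 * d^2) = (2/3) * p^2 := by
          rw [hp]
          have : d ≠ 0 := ne_of_gt hdpos
          field_simp
        rw [hRx] at hR
        show 3 / (2 * d^2) - ε < R' x
        rw [hident]
        nlinarith [mul_nonneg (mul_nonneg hppos.le hε.le) (by linarith : (0:ℝ) ≤ x + 1),
          sq_nonneg (ε * (x + 1))]
    exact main (show t ∈ Icc (0:ℝ) t from ⟨ht, le_refl t⟩)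
  by_contra hcon
  push_neg at hcon
  have ht1 : (0:ℝ) < t + 1 := by linarith
  set δ : ℝ := (-3 / (2 * (t + 1/4)) - R t) / (t + 1) with hδ
  have hδpos : 0 < δ := by
    apply div_pos _ ht1
    linarith
  have hmul : δ * (t + 1) = -3 / (2 * (t + 1/4)) - R t := by
    rw [hδ]
    exact div_mul_cancel₀ _ (ne_of_gt ht1)
  have h2 : (δ/2) * (t + 1) = (-3 / (2 * (t + 1/4)) - R t) / 2 := by
    rw [div_mul_eq_mul_div, hmul]
  linarith [key (δ/2) (by linarith)]
end

section
/- Let R, V : (0, ∞) → ℝ be differentiable functions with V(t) > 0, R(t) ≤ 0 for all t, and suppose R'(t) ≥ (2/3)·R(t)² and V'(t) ≤ -R(t)·V(t) for all t. Then the function t ↦ R(t)·V(t)^{2/3} is non-decreasing. -/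
/-- Monotonicity of the scale-invariant quantity `R(t)·V(t)^{2/3}`. -/
theorem rhat_monotone (R R' V V' : ℝ → ℝ)
    (hV : ∀ t ∈ Set.Ioi (0:ℝ), 0 < V t)
    (hRle : ∀ t ∈ Set.Ioi (0:ℝ), R t ≤ 0)
    (hRd : ∀ t ∈ Set.Ioi (0:ℝ), HasDerivAt R (R' t) t)
    (hVd : ∀ t ∈ Set.Ioi (0:ℝ), HasDerivAt V (V' t) t)
    (hR' : ∀ t ∈ Set.Ioi (0:ℝ), (2/3) * (R t)^2 ≤ R' t)
    (hV' : ∀ t ∈ Set.Ioi (0:ℝ), V' t ≤ -R t * V t) :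
    MonotoneOn (fun t : ℝ => R t * (V t) ^ ((2:ℝ)/3)) (Set.Ioi 0) := by
  have hint : interior (Set.Ioi (0:ℝ)) = Set.Ioi 0 := isOpen_Ioi.interior_eq
  set f' : ℝ → ℝ := fun t =>
    R' t * V t ^ ((2:ℝ)/3) + (V' t * (2/3) * V t ^ ((2:ℝ)/3 - 1)) * R t with hf'
  have hderiv : ∀ t ∈ Set.Ioi (0:ℝ),
      HasDerivAt (fun t : ℝ => R t * (V t) ^ ((2:ℝ)/3)) (f' t) t := by
    intro t ht
    have := (hRd t ht).mul ((hVd t ht).rpow_const (p := (2:ℝ)/3) (Or.inl (hV t ht).ne'))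
    replace this : HasDerivAt (fun t : ℝ => R t * (V t) ^ ((2:ℝ)/3)) _ t := this
    convert this using 1
    simp only [hf']
    ring
  apply monotoneOn_of_hasDerivWithinAt_nonneg (convex_Ioi 0)
    (f' := f')
  · intro t ht
    exact (hderiv t ht).continuousAt.continuousWithinAt
  · intro t ht
    rw [hint] at ht ⊢
    exact (hderiv t ht).hasDerivWithinAt
  · intro t ht
    rw [hint] at ht
    have hVt := hV t ht
    have hRt := hRle t ht
    have hp : (0:ℝ) < V t ^ ((2:ℝ)/3) := Real.rpow_pos_of_pos hVt _
    have hp1 : (0:ℝ) < V t ^ ((2:ℝ)/3 - 1) := Real.rpow_pos_of_pos hVt _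
    have h1 : (2/3) * (R t)^2 * V t ^ ((2:ℝ)/3) ≤ R' t * V t ^ ((2:ℝ)/3) :=
      mul_le_mul_of_nonneg_right (hR' t ht) hp.le
    have h2 : (-R t * V t) * R t ≤ V' t * R t := by
      have := hV' t ht
      nlinarith
    have hVpow : V t ^ ((2:ℝ)/3 - 1) * V t = V t ^ ((2:ℝ)/3) := by
      nth_rewrite 2 [← Real.rpow_one (V t)]
      rw [← Real.rpow_add hVt]
      norm_num
    have h3 : (V' t * (2/3) * V t ^ ((2:ℝ)/3 - 1)) * R t
        ≥ -((2/3) * (R t)^2 * V t ^ ((2:ℝ)/3)) := by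
      have := mul_le_mul_of_nonneg_right h2 hp1.le
      nlinarith [hVpow]
    simp only [hf']
    linarith
end
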